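/- There is a computable function which, given any inference rule r, produces an inference rule r_nf in reduced normal form such that r is admissible in LTL_{Past,m} if and only if r_nf is admissible in LTL_{Past,m}. -/

import Mathlib

/-- Formulas of the language of `LTL_{Past,m}`: atoms, negation, conjunction,
`N` (next) and `S` (since). -/
inductive Formula : Type
  | atom : ℕ → Formula
  | neg : Formula → Formula
  | conj : Formula → Formula → Formula
  | next : Formula → Formula
  | since : Formula → Formula → Formula
deriving DecidableEq

namespace Formula

/-- Implication, defined as usual from `¬` and `∧`. -/
def imp (φ ψ : Formula) : Formula := .neg (.conj φ (.neg ψ))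

/-- Disjunction, defined as usual from `¬` and `∧`. -/
def disj (φ ψ : Formula) : Formula := .neg (.conj (.neg φ) (.neg ψ))

/-- The constant true formula `⊤`, defined as usual. -/
def top : Formula := imp (.atom 0) (.atom 0)

/-- `□φ` abbreviates `¬(⊤ S ¬φ)`. -/
def box (φ : Formula) : Formula := .neg (.since top (.neg φ))

end Formula

/-- Truth of a formula at a state `a : ℕ` in a model given by a valuation
`V : ℕ → Set ℕ`, in the bounded (measure of intransitivity `m`) semantics. -/
def Sat (m : ℕ) (V : ℕ → Set ℕ) : Formula → ℕ → Prop
  | .atom i, a => a ∈ V i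
  | .neg φ, a => ¬ Sat m V φ a
  | .conj φ ψ, a => Sat m V φ a ∧ Sat m V ψ a
  | .next φ, a => Sat m V φ (a + 1)
  | .since φ ψ, a =>
      ∃ b, a ≤ b ∧ b ≤ a + m ∧ Sat m V ψ b ∧ ∀ c, a ≤ c → c < b → Sat m V φ c

/-- A formula is valid in a model `V` if it is true at every state. -/
def ValidIn (m : ℕ) (V : ℕ → Set ℕ) (φ : Formula) : Prop := ∀ a : ℕ, Sat m V φ a

/-- The logic `LTL_{Past,m}`: the set of formulas valid in every model. -/
def Logic (m : ℕ) : Set Formula := { φ | ∀ V : ℕ → Set ℕ, ValidIn m V φ }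

/-- Truth at a state in the unbounded (transitive) semantics of `LTL`. -/
def SatU (V : ℕ → Set ℕ) : Formula → ℕ → Prop
  | .atom i, a => a ∈ V i
  | .neg φ, a => ¬ SatU V φ a
  | .conj φ ψ, a => SatU V φ a ∧ SatU V ψ a
  | .next φ, a => SatU V φ (a + 1)
  | .since φ ψ, a =>
      ∃ b, a ≤ b ∧ SatU V ψ b ∧ ∀ c, a ≤ c → c < b → SatU V φ c

/-- The transitive logic `LTL`: formulas true at every state of every model in
the unbounded semantics. -/
def LogicU : Set Formula := { φ | ∀ (V : ℕ → Set ℕ) (a : ℕ), SatU V φ a }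

/-- Truth at a state in the non-uniformly non-transitive semantics, where the
reach of `S` at state `a` is bounded by `f a` for a bound function `f`. -/
def SatB (f : ℕ → ℕ) (V : ℕ → Set ℕ) : Formula → ℕ → Prop
  | .atom i, a => a ∈ V i
  | .neg φ, a => ¬ SatB f V φ a
  | .conj φ ψ, a => SatB f V φ a ∧ SatB f V ψ a
  | .next φ, a => SatB f V φ (a + 1)
  | .since φ ψ, a =>
      ∃ b, a ≤ b ∧ b ≤ f a ∧ SatB f V ψ b ∧ ∀ c, a ≤ c → c < b → SatB f V φ c

/-- The non-uniformly non-transitive logic `LTL_{Past}`: formulas true at every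
state of every model over every bound function. -/
def LogicPast : Set Formula :=
  { φ | ∀ f : ℕ → ℕ, (∀ i, i < f i) → (∀ i, f i < f (i + 1)) →
      ∀ (V : ℕ → Set ℕ) (a : ℕ), SatB f V φ a }

/-- Substitutions map atoms to formulas and extend homomorphically. -/
def substF (σ : ℕ → Formula) : Formula → Formula
  | .atom i => σ i
  | .neg φ => .neg (substF σ φ)
  | .conj φ ψ => .conj (substF σ φ) (substF σ ψ)
  | .next φ => .next (substF σ φ)
  | .since φ ψ => .since (substF σ φ) (substF σ ψ)

/-- An inference rule: a finite list of premises and a conclusion. -/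
structure Rule : Type where
  premises : List Formula
  conclusion : Formula
deriving DecidableEq

/-- A rule is valid in a model `V` if validity of all premises in `V` implies
validity of the conclusion in `V`. -/
def RuleValid (m : ℕ) (V : ℕ → Set ℕ) (r : Rule) : Prop :=
  (∀ φ ∈ r.premises, ValidIn m V φ) → ValidIn m V r.conclusion

/-- A rule is admissible in `LTL_{Past,m}` if every substitution making all
premises theorems also makes the conclusion a theorem. -/
def Admissible (m : ℕ) (r : Rule) : Prop :=
  ∀ σ : ℕ → Formula,
    (∀ φ ∈ r.premises, substF σ φ ∈ Logic m) → substF σ r.conclusion ∈ Logic m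

/-- Admissibility in the transitive logic `LTL`. -/
def AdmissibleU (r : Rule) : Prop :=
  ∀ σ : ℕ → Formula,
    (∀ φ ∈ r.premises, substF σ φ ∈ LogicU) → substF σ r.conclusion ∈ LogicU

/-- The number of symbols in a formula. -/
def sizeF : Formula → ℕ
  | .atom _ => 1
  | .neg φ => sizeF φ + 1
  | .conj φ ψ => sizeF φ + sizeF ψ + 1
  | .next φ => sizeF φ + 1
  | .since φ ψ => sizeF φ + sizeF ψ + 1

/-- The number of symbols in a rule. -/
def ruleSize (r : Rule) : ℕ :=
  (r.premises.map sizeF).sum + sizeF r.conclusion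

/-- An (injective) numerical encoding of formulas. -/
def encF : Formula → ℕ
  | .atom i => 5 * i
  | .neg φ => 5 * encF φ + 1
  | .conj φ ψ => 5 * Nat.pair (encF φ) (encF ψ) + 2
  | .next φ => 5 * encF φ + 3
  | .since φ ψ => 5 * Nat.pair (encF φ) (encF ψ) + 4

/-- An (injective) numerical encoding of rules. -/
def encR (r : Rule) : ℕ :=
  Nat.pair (Encodable.encode (r.premises.map encF)) (encF r.conclusion)

/-- `lit true φ = φ` and `lit false φ = ¬φ`. -/
def lit (t : Bool) (φ : Formula) : Formula := if t then φ else .neg φ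

/-- Conjunction of a list of formulas. -/
def bigConj : List Formula → Formula
  | [] => Formula.top
  | [φ] => φ
  | φ :: ψ :: rest => .conj φ (bigConj (ψ :: rest))

/-- Disjunction of a list of formulas. -/
def bigDisj : List Formula → Formula
  | [] => .neg Formula.top
  | [φ] => φ
  | φ :: ψ :: rest => Formula.disj φ (bigDisj (ψ :: rest))

/-- A single disjunct of a reduced normal form over variables `x_1,…,x_n`
(the atoms `0,…,n-1`): for each `i` a literal over `x_i`, for each `i` a
literal over `N x_i`, and for each pair `i ≠ k` a literal over `x_i S x_k`. -/
def disjunct (n : ℕ) (t0 t1 : Fin n → Bool) (t2 : Fin n → Fin n → Bool) : Formula :=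
  bigConj
    (((List.finRange n).map fun i => lit (t0 i) (.atom i)) ++
     ((List.finRange n).map fun i => lit (t1 i) (.next (.atom i))) ++
     ((List.finRange n).flatMap fun i =>
        ((List.finRange n).filter fun k => k != i).map fun k =>
          lit (t2 i k) (.since (.atom i) (.atom k))))

/-- A rule is in reduced normal form if it has the shape `ε / x_1`, where `ε`
is a disjunction of disjuncts as above. -/
def IsRNF (r : Rule) : Prop :=
  ∃ n : ℕ, 0 < n ∧
    ∃ ds : List ((Fin n → Bool) × (Fin n → Bool) × (Fin n → Fin n → Bool)),
      ds ≠ [] ∧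
      r.premises = [bigDisj (ds.map fun d => disjunct n d.1 d.2.1 d.2.2)] ∧
      r.conclusion = .atom 0

/-- Boolean formulas built from argument places `p_1,…,p_n, q_1,…,q_k` using
only the Boolean connectives `¬` and `∧`. -/
inductive BForm (n k : ℕ) : Type
  | pvar : Fin n → BForm n k
  | qvar : Fin k → BForm n k
  | neg : BForm n k → BForm n k
  | conj : BForm n k → BForm n k → BForm n k

/-- Substitute formulas for the argument places of a Boolean formula. -/
def BForm.substB {n k : ℕ} (α : Fin n → Formula) (δ : Fin k → Formula) :
    BForm n k → Formula
  | .pvar i => α i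
  | .qvar j => δ j
  | .neg φ => Formula.neg (BForm.substB α δ φ)
  | .conj φ ψ => Formula.conj (BForm.substB α δ φ) (BForm.substB α δ ψ)

namespace RNFproof

open Formula

/-! ### Decoding of formulas -/

instance : Inhabited Formula := ⟨.atom 0⟩

def decF (n : ℕ) : Formula :=
  if h0 : n % 5 = 0 then .atom (n / 5)
  else if n % 5 = 1 then .neg (decF (n / 5))
  else if n % 5 = 2 then .conj (decF (n/5).unpair.1) (decF (n/5).unpair.2)
  else if n % 5 = 3 then .next (decF (n / 5))
  else .since (decF (n/5).unpair.1) (decF (n/5).unpair.2)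
decreasing_by
  all_goals {
    have hn : 0 < n := by
      rcases Nat.eq_zero_or_pos n with h | h
      · subst h; simp at h0
      · exact h
    have h5 : n / 5 < n := Nat.div_lt_self hn (by norm_num)
    first
      | exact h5
      | exact lt_of_le_of_lt (Nat.unpair_left_le _) h5
      | exact lt_of_le_of_lt (Nat.unpair_right_le _) h5 }

lemma mod5_0 (i : ℕ) : (5 * i) % 5 = 0 := by omega
lemma div5_0 (i : ℕ) : (5 * i) / 5 = i := by omega
lemma mod5_r (e r : ℕ) (hr : r < 5) : (5 * e + r) % 5 = r := by omega
lemma div5_r (e r : ℕ) (hr : r < 5) : (5 * e + r) / 5 = e := by omega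

lemma decF_atom (i : ℕ) : decF (5 * i) = .atom i := by
  rw [decF]; simp [mod5_0, div5_0]

lemma decF_neg (e : ℕ) : decF (5 * e + 1) = .neg (decF e) := by
  rw [decF]; simp [mod5_r, div5_r]

lemma decF_next (e : ℕ) : decF (5 * e + 3) = .next (decF e) := by
  rw [decF]; simp [mod5_r, div5_r]

lemma decF_conj (e1 e2 : ℕ) :
    decF (5 * Nat.pair e1 e2 + 2) = .conj (decF e1) (decF e2) := by
  rw [decF]; simp [mod5_r, div5_r]

lemma decF_since (e1 e2 : ℕ) :
    decF (5 * Nat.pair e1 e2 + 4) = .since (decF e1) (decF e2) := by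
  rw [decF]; simp [mod5_r, div5_r]

lemma decF_encF : ∀ φ : Formula, decF (encF φ) = φ := by
  intro φ
  induction φ with
  | atom i => simpa [encF] using decF_atom i
  | neg φ ih => simpa [encF, decF_neg] using ih
  | conj φ ψ ih1 ih2 => simp [encF, decF_conj, ih1, ih2]
  | next φ ih => simpa [encF, decF_next] using ih
  | since φ ψ ih1 ih2 => simp [encF, decF_since, ih1, ih2]

instance formulaEncodable : Encodable Formula :=
  ⟨encF, fun n => some (decF n), fun φ => by simp [decF_encF]⟩

@[simp] lemma encode_formula (φ : Formula) : Encodable.encode φ = encF φ := rfl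
@[simp] lemma decode_formula (n : ℕ) :
    (Encodable.decode n : Option Formula) = some (decF n) := rfl

end RNFproof
namespace RNFproof

open Primrec

lemma getD_map_range {α : Type*} (f : ℕ → α) {k n : ℕ} (d : α) (h : k < n) :
    ((List.range n).map f).getD k d = f k := by
  rw [List.getD_eq_getElem?_getD]
  simp [List.getElem?_map, List.getElem?_range h]

/-- normalization of codes -/
def nuF (n : ℕ) : ℕ := encF (decF n)

def nuStep (l : List ℕ) : Option ℕ :=
  let n := l.length
  if n % 5 = 0 then some n
  else if n % 5 = 1 then some (5 * l.getD (n/5) 0 + 1)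
  else if n % 5 = 2 then
    some (5 * Nat.pair (l.getD (n/5).unpair.1 0) (l.getD (n/5).unpair.2 0) + 2)
  else if n % 5 = 3 then some (5 * l.getD (n/5) 0 + 3)
  else some (5 * Nat.pair (l.getD (n/5).unpair.1 0) (l.getD (n/5).unpair.2 0) + 4)

lemma primrec_nuStep : Primrec nuStep := by
  unfold nuStep
  have hlen : Primrec (fun l : List ℕ => l.length) := list_length
  have hmod : Primrec (fun l : List ℕ => l.length % 5) :=
    nat_mod.comp hlen (const 5)
  have hdiv : Primrec (fun l : List ℕ => l.length / 5) :=
    nat_div.comp hlen (const 5)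
  have hget : Primrec (fun l : List ℕ => l.getD (l.length/5) 0) :=
    (list_getD 0).comp .id hdiv
  have hu1 : Primrec (fun l : List ℕ => l.getD (l.length/5).unpair.1 0) :=
    (list_getD 0).comp .id (fst.comp (unpair.comp hdiv))
  have hu2 : Primrec (fun l : List ℕ => l.getD (l.length/5).unpair.2 0) :=
    (list_getD 0).comp .id (snd.comp (unpair.comp hdiv))
  have hpair : Primrec (fun l : List ℕ =>
      5 * Nat.pair (l.getD (l.length/5).unpair.1 0) (l.getD (l.length/5).unpair.2 0)) :=
    nat_mul.comp (const 5) (Primrec₂.natPair.comp hu1 hu2)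
  have heq : ∀ r : ℕ, PrimrecPred (fun l : List ℕ => l.length % 5 = r) := fun r =>
    PrimrecRel.comp Primrec.eq hmod (const r)
  exact .ite (heq 0) (option_some.comp hlen) <|
    .ite (heq 1) (option_some.comp (nat_add.comp (nat_mul.comp (const 5) hget) (const 1))) <|
    .ite (heq 2) (option_some.comp (nat_add.comp hpair (const 2))) <|
    .ite (heq 3) (option_some.comp (nat_add.comp (nat_mul.comp (const 5) hget) (const 3)))
      (option_some.comp (nat_add.comp hpair (const 4)))

lemma nuStep_spec (n : ℕ) : nuStep ((List.range n).map nuF) = some (nuF n) := by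
  have hlen : ((List.range n).map nuF).length = n := by simp
  have hget : ∀ k, k < n → ((List.range n).map nuF).getD k 0 = nuF k := fun k hk =>
    getD_map_range nuF 0 hk
  have hpos : n % 5 ≠ 0 → 0 < n := by
    intro h; rcases Nat.eq_zero_or_pos n with h0 | h0
    · subst h0; simp at h
    · exact h0
  have hcases : n % 5 = 0 ∨ n % 5 = 1 ∨ n % 5 = 2 ∨ n % 5 = 3 ∨ n % 5 = 4 := by omega
  have hdivlt : n % 5 ≠ 0 → n / 5 < n := fun h => Nat.div_lt_self (hpos h) (by norm_num)
  have hu1 : n % 5 ≠ 0 → (n/5).unpair.1 < n := fun h =>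
    lt_of_le_of_lt (Nat.unpair_left_le _) (hdivlt h)
  have hu2 : n % 5 ≠ 0 → (n/5).unpair.2 < n := fun h =>
    lt_of_le_of_lt (Nat.unpair_right_le _) (hdivlt h)
  unfold nuStep
  simp only [hlen]
  rcases hcases with h | h | h | h | h <;>
      simp only [h, if_true, if_false, reduceIte, Option.some.injEq] <;>
      rw [show nuF n = encF (decF n) from rfl, decF] <;>
      simp only [h, reduceIte, dite_eq_ite, if_true, if_false]
  · simp [encF]; omega
  · rw [hget _ (hdivlt (by omega))]; simp [encF, nuF]
  · rw [hget _ (hu1 (by omega)), hget _ (hu2 (by omega))]; simp [encF, nuF]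
  · rw [hget _ (hdivlt (by omega))]; simp [encF, nuF]
  · rw [hget _ (hu1 (by omega)), hget _ (hu2 (by omega))]; simp [encF, nuF]

end RNFproof
namespace RNFproof

open Primrec

lemma primrec_nuF : Primrec nuF := by
  have h2 : Primrec₂ (fun (_ : ℕ) (n : ℕ) => nuF n) := by
    apply Primrec.nat_strong_rec _ (g := fun (_ : ℕ) (l : List ℕ) => nuStep l)
      (primrec_nuStep.comp snd).to₂
    intro _ n
    exact nuStep_spec n
  exact h2.comp (const 0) .id

instance formulaPrimcodable : Primcodable Formula :=
  { formulaEncodable with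
    prim := by
      have h : Primrec fun n : ℕ =>
          Encodable.encode (Encodable.decode n : Option Formula) := by
        have : Primrec fun n : ℕ => nuF n + 1 := succ.comp primrec_nuF
        exact this.of_eq fun n => by
          simp [Encodable.encode_some, nuF]
      exact Primrec.nat_iff.mp h }

lemma primrec_encF : Primrec encF := Primrec.encode

lemma primrec_decF : Primrec decF := by
  have : Primrec fun n : ℕ => (Encodable.decode n : Option Formula).iget :=
    option_iget.comp Primrec.decode
  exact this.of_eq fun n => by simp [Option.iget]

lemma primrec_atom : Primrec Formula.atom := by
  have : Primrec fun i : ℕ => decF (5 * i) :=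
    primrec_decF.comp (nat_mul.comp (const 5) .id)
  exact this.of_eq fun i => decF_atom i

lemma primrec_neg : Primrec Formula.neg := by
  have : Primrec fun φ : Formula => decF (5 * encF φ + 1) :=
    primrec_decF.comp (nat_add.comp (nat_mul.comp (const 5) primrec_encF) (const 1))
  exact this.of_eq fun φ => by rw [decF_neg, decF_encF]

lemma primrec_next : Primrec Formula.next := by
  have : Primrec fun φ : Formula => decF (5 * encF φ + 3) :=
    primrec_decF.comp (nat_add.comp (nat_mul.comp (const 5) primrec_encF) (const 3))
  exact this.of_eq fun φ => by rw [decF_next, decF_encF]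

lemma primrec_conj : Primrec₂ Formula.conj := by
  have : Primrec fun p : Formula × Formula =>
      decF (5 * Nat.pair (encF p.1) (encF p.2) + 2) :=
    primrec_decF.comp (nat_add.comp (nat_mul.comp (const 5)
      (Primrec₂.natPair.comp (primrec_encF.comp fst) (primrec_encF.comp snd))) (const 2))
  exact (this.of_eq fun p => by rw [decF_conj, decF_encF, decF_encF]).to₂

lemma primrec_since : Primrec₂ Formula.since := by
  have : Primrec fun p : Formula × Formula =>
      decF (5 * Nat.pair (encF p.1) (encF p.2) + 4) :=
    primrec_decF.comp (nat_add.comp (nat_mul.comp (const 5)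
      (Primrec₂.natPair.comp (primrec_encF.comp fst) (primrec_encF.comp snd))) (const 4))
  exact (this.of_eq fun p => by rw [decF_since, decF_encF, decF_encF]).to₂

/-- first child of a formula -/
def child1 : Formula → Formula
  | .atom i => .atom i
  | .neg γ => γ
  | .conj γ _ => γ
  | .next γ => γ
  | .since γ _ => γ

/-- second child of a formula -/
def child2 : Formula → Formula
  | .atom i => .atom i
  | .neg γ => γ
  | .conj _ γ => γ
  | .next γ => γ
  | .since _ γ => γ

/-- constructor tag of a formula -/
def ctor (φ : Formula) : ℕ := encF φ % 5

@[simp] lemma ctor_atom (i : ℕ) : ctor (.atom i) = 0 := by simp [ctor, encF, mod5_0]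
@[simp] lemma ctor_neg (φ : Formula) : ctor (.neg φ) = 1 := by simp [ctor, encF, mod5_r]
@[simp] lemma ctor_conj (φ ψ : Formula) : ctor (.conj φ ψ) = 2 := by simp [ctor, encF, mod5_r]
@[simp] lemma ctor_next (φ : Formula) : ctor (.next φ) = 3 := by simp [ctor, encF, mod5_r]
@[simp] lemma ctor_since (φ ψ : Formula) : ctor (.since φ ψ) = 4 := by simp [ctor, encF, mod5_r]

lemma primrec_ctor : Primrec ctor := nat_mod.comp primrec_encF (const 5)

lemma primrec_child1 : Primrec child1 := by
  have : Primrec fun φ : Formula =>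
      decF (if encF φ % 5 = 0 then encF φ
            else if encF φ % 5 = 1 ∨ encF φ % 5 = 3 then encF φ / 5
            else (encF φ / 5).unpair.1) := by
    apply primrec_decF.comp
    have hmod : Primrec fun φ : Formula => encF φ % 5 := nat_mod.comp primrec_encF (const 5)
    have hdiv : Primrec fun φ : Formula => encF φ / 5 := nat_div.comp primrec_encF (const 5)
    exact .ite (PrimrecRel.comp Primrec.eq hmod (const 0)) primrec_encF
      (.ite (PrimrecPred.or (PrimrecRel.comp Primrec.eq hmod (const 1))
          (PrimrecRel.comp Primrec.eq hmod (const 3))) hdiv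
        (fst.comp (unpair.comp hdiv)))
  apply this.of_eq
  intro φ
  cases φ <;> simp [encF, child1, mod5_0, div5_0, mod5_r, div5_r, decF_atom, decF_encF]

lemma primrec_child2 : Primrec child2 := by
  have : Primrec fun φ : Formula =>
      decF (if encF φ % 5 = 0 then encF φ
            else if encF φ % 5 = 1 ∨ encF φ % 5 = 3 then encF φ / 5
            else (encF φ / 5).unpair.2) := by
    apply primrec_decF.comp
    have hmod : Primrec fun φ : Formula => encF φ % 5 := nat_mod.comp primrec_encF (const 5)
    have hdiv : Primrec fun φ : Formula => encF φ / 5 := nat_div.comp primrec_encF (const 5)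
    exact .ite (PrimrecRel.comp Primrec.eq hmod (const 0)) primrec_encF
      (.ite (PrimrecPred.or (PrimrecRel.comp Primrec.eq hmod (const 1))
          (PrimrecRel.comp Primrec.eq hmod (const 3))) hdiv
        (snd.comp (unpair.comp hdiv)))
  apply this.of_eq
  intro φ
  cases φ <;> simp [encF, child2, mod5_0, div5_0, mod5_r, div5_r, decF_atom, decF_encF]

end RNFproof
namespace RNFproof

open Primrec

/-- The list of subformulas of a formula (with repetitions), the formula first. -/
def subfs : Formula → List Formula
  | .atom i => [.atom i]
  | .neg φ => .neg φ :: subfs φ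
  | .conj φ ψ => .conj φ ψ :: (subfs φ ++ subfs ψ)
  | .next φ => .next φ :: subfs φ
  | .since φ ψ => .since φ ψ :: (subfs φ ++ subfs ψ)

lemma self_mem_subfs (φ : Formula) : φ ∈ subfs φ := by
  cases φ <;> simp [subfs]

lemma subfs_closed : ∀ φ δ : Formula, δ ∈ subfs φ → subfs δ ⊆ subfs φ := by
  intro φ
  induction φ with
  | atom i => intro δ h; simp [subfs] at h; subst h; simp [subfs]
  | neg γ ih =>
    intro δ h
    simp [subfs] at h
    rcases h with h | h
    · subst h; exact fun x hx => hx
    · exact fun x hx => by simp [subfs]; right; exact ih δ h hx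
  | conj γ γ' ih ih' =>
    intro δ h
    simp [subfs] at h
    rcases h with h | h | h
    · subst h; exact fun x hx => hx
    · exact fun x hx => by simp [subfs]; right; left; exact ih δ h hx
    · exact fun x hx => by simp [subfs]; right; right; exact ih' δ h hx
  | next γ ih =>
    intro δ h
    simp [subfs] at h
    rcases h with h | h
    · subst h; exact fun x hx => hx
    · exact fun x hx => by simp [subfs]; right; exact ih δ h hx
  | since γ γ' ih ih' =>
    intro δ h
    simp [subfs] at h
    rcases h with h | h | h
    · subst h; exact fun x hx => hx
    · exact fun x hx => by simp [subfs]; right; left; exact ih δ h hx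
    · exact fun x hx => by simp [subfs]; right; right; exact ih' δ h hx

/-- code-level subformula computation -/
def fsub (n : ℕ) : List ℕ :=
  if n % 5 = 0 then [n]
  else if n % 5 = 1 ∨ n % 5 = 3 then n :: fsub (n / 5)
  else n :: (fsub (n/5).unpair.1 ++ fsub (n/5).unpair.2)
decreasing_by
  all_goals {
    have hn : 0 < n := by
      rcases Nat.eq_zero_or_pos n with h | h
      · subst h; simp_all
      · exact h
    have h5 : n / 5 < n := Nat.div_lt_self hn (by norm_num)
    first
      | exact h5
      | exact lt_of_le_of_lt (Nat.unpair_left_le _) h5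
      | exact lt_of_le_of_lt (Nat.unpair_right_le _) h5 }

lemma fsub_encF : ∀ φ : Formula, fsub (encF φ) = (subfs φ).map encF := by
  intro φ
  induction φ with
  | atom i => rw [fsub]; simp [encF, subfs, mod5_0]
  | neg γ ih => rw [fsub]; simp [encF, subfs, mod5_r, div5_r, ih]
  | conj γ γ' ih ih' => rw [fsub]; simp [encF, subfs, mod5_r, div5_r, ih, ih']
  | next γ ih => rw [fsub]; simp [encF, subfs, mod5_r, div5_r, ih]
  | since γ γ' ih ih' => rw [fsub]; simp [encF, subfs, mod5_r, div5_r, ih, ih']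

def fsubStep (l : List (List ℕ)) : Option (List ℕ) :=
  let n := l.length
  if n % 5 = 0 then some [n]
  else if n % 5 = 1 ∨ n % 5 = 3 then some (n :: l.getD (n/5) [])
  else some (n :: (l.getD (n/5).unpair.1 [] ++ l.getD (n/5).unpair.2 []))

lemma primrec_fsubStep : Primrec fsubStep := by
  unfold fsubStep
  have hlen : Primrec (fun l : List (List ℕ) => l.length) := list_length
  have hmod : Primrec (fun l : List (List ℕ) => l.length % 5) := nat_mod.comp hlen (const 5)
  have hdiv : Primrec (fun l : List (List ℕ) => l.length / 5) := nat_div.comp hlen (const 5)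
  have hget : Primrec (fun l : List (List ℕ) => l.getD (l.length/5) []) :=
    (list_getD []).comp .id hdiv
  have hu1 : Primrec (fun l : List (List ℕ) => l.getD (l.length/5).unpair.1 []) :=
    (list_getD []).comp .id (fst.comp (unpair.comp hdiv))
  have hu2 : Primrec (fun l : List (List ℕ) => l.getD (l.length/5).unpair.2 []) :=
    (list_getD []).comp .id (snd.comp (unpair.comp hdiv))
  have heq : ∀ r : ℕ, PrimrecPred (fun l : List (List ℕ) => l.length % 5 = r) := fun r =>
    PrimrecRel.comp Primrec.eq hmod (const r)
  exact .ite (heq 0) (option_some.comp (list_cons.comp hlen (const [])))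
    (.ite (PrimrecPred.or (heq 1) (heq 3))
      (option_some.comp (list_cons.comp hlen hget))
      (option_some.comp (list_cons.comp hlen (list_append.comp hu1 hu2))))

lemma primrec_fsub : Primrec fsub := by
  have h2 : Primrec₂ (fun (_ : ℕ) (n : ℕ) => fsub n) := by
    apply Primrec.nat_strong_rec _ (g := fun (_ : ℕ) (l : List (List ℕ)) => fsubStep l)
      (primrec_fsubStep.comp snd).to₂
    intro _ n
    have hlen : ((List.range n).map fsub).length = n := by simp
    have hget : ∀ k, k < n → ((List.range n).map fsub).getD k [] = fsub k := fun k hk =>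
      getD_map_range fsub [] hk
    have hpos : ¬ n % 5 = 0 → 0 < n := by
      intro h; rcases Nat.eq_zero_or_pos n with h0 | h0
      · subst h0; simp at h
      · exact h0
    have hdivlt : ¬ n % 5 = 0 → n / 5 < n := fun h => Nat.div_lt_self (hpos h) (by norm_num)
    unfold fsubStep
    simp only [hlen]
    by_cases h0 : n % 5 = 0
    · rw [fsub]; simp [h0]
    by_cases h13 : n % 5 = 1 ∨ n % 5 = 3
    · rw [fsub]
      rw [hget _ (hdivlt h0)]
      simp [h0, h13]
    · rw [fsub]
      rw [hget _ (lt_of_le_of_lt (Nat.unpair_left_le _) (hdivlt h0)),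
        hget _ (lt_of_le_of_lt (Nat.unpair_right_le _) (hdivlt h0))]
      simp [h0, h13]
  exact h2.comp (const 0) .id

lemma primrec_subfs : Primrec subfs := by
  have : Primrec fun φ : Formula => (fsub (encF φ)).map decF :=
    list_map (primrec_fsub.comp primrec_encF) (primrec_decF.comp snd).to₂
  apply this.of_eq
  intro φ
  rw [fsub_encF, List.map_map]
  simp [Function.comp_def, decF_encF]

end RNFproof
namespace RNFproof

open Primrec

instance : Inhabited Rule := ⟨⟨[], .atom 0⟩⟩

def ruleEquiv : Rule ≃ List Formula × Formula where
  toFun r := (r.premises, r.conclusion)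
  invFun p := ⟨p.1, p.2⟩
  left_inv r := rfl
  right_inv p := rfl

instance rulePrimcodable : Primcodable Rule := Primcodable.ofEquiv _ ruleEquiv

lemma encode_list_formula (l : List Formula) :
    Encodable.encode l = Encodable.encode (l.map encF) := by
  induction l with
  | nil => rfl
  | cons φ l ih =>
    rw [List.map_cons, Encodable.encode_list_cons, Encodable.encode_list_cons, ih]
    rfl

lemma encode_rule (r : Rule) : Encodable.encode r = encR r := by
  have h1 : Encodable.encode r = Encodable.encode (ruleEquiv r) :=
    Encodable.encode_ofEquiv ruleEquiv r
  rw [h1]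
  show Encodable.encode ((r.premises, r.conclusion) : List Formula × Formula) = _
  rw [Encodable.encode_prod_val, encR, encode_list_formula]
  rfl

lemma primrec_premises : Primrec Rule.premises :=
  (fst.comp (Primrec.of_equiv (e := ruleEquiv))).of_eq fun r => rfl

lemma primrec_conclusion : Primrec Rule.conclusion :=
  (snd.comp (Primrec.of_equiv (e := ruleEquiv))).of_eq fun r => rfl

lemma primrec_mkRule : Primrec₂ (fun (l : List Formula) (φ : Formula) => Rule.mk l φ) := by
  have : Primrec fun p : List Formula × Formula => ruleEquiv.symm p := Primrec.of_equiv_symm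
  exact (this.of_eq fun p => rfl).to₂

end RNFproof
namespace RNFproof

/-! ### The normal-form construction -/

/-- all boolean lists of length `n` -/
def allBools : ℕ → List (List Bool)
  | 0 => [[]]
  | n+1 => (allBools n).flatMap fun l => [true :: l, false :: l]

lemma mem_allBools : ∀ {n : ℕ} {l : List Bool}, l ∈ allBools n ↔ l.length = n := by
  intro n
  induction n with
  | zero => intro l; simp [allBools, List.length_eq_zero_iff]
  | succ n ih =>
    intro l
    simp only [allBools, List.mem_flatMap]
    constructor
    · rintro ⟨l', hl', h⟩
      simp only [List.mem_cons, List.mem_singleton] at h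
      rcases h with rfl | (rfl | h)
      · simp [ih.mp hl']
      · simp [ih.mp hl']
      · simp at h
    · intro hl
      cases l with
      | nil => simp at hl
      | cons b l' =>
        refine ⟨l', ih.mpr (by simpa using hl), ?_⟩
        cases b <;> simp

def triples (n : ℕ) : List (List Bool × List Bool × List Bool) :=
  (allBools n).flatMap fun x => (allBools n).flatMap fun y => (allBools (n*n)).map fun z => (x,y,z)

lemma mem_triples {n : ℕ} {t : List Bool × List Bool × List Bool} :
    t ∈ triples n ↔ t.1.length = n ∧ t.2.1.length = n ∧ t.2.2.length = n * n := by
  obtain ⟨x, y, z⟩ := t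
  constructor
  · intro h
    rcases List.mem_flatMap.mp h with ⟨x', hx', h⟩
    rcases List.mem_flatMap.mp h with ⟨y', hy', h⟩
    rcases List.mem_map.mp h with ⟨z', hz', heq⟩
    obtain ⟨rfl, rfl, rfl⟩ : x' = x ∧ y' = y ∧ z' = z := by
      simpa [Prod.ext_iff, and_comm] using heq
    exact ⟨mem_allBools.mp hx', mem_allBools.mp hy', mem_allBools.mp hz'⟩
  · rintro ⟨hx, hy, hz⟩
    exact List.mem_flatMap.mpr ⟨x, mem_allBools.mpr hx,
      List.mem_flatMap.mpr ⟨y, mem_allBools.mpr hy,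
        List.mem_map.mpr ⟨z, mem_allBools.mpr hz, rfl⟩⟩⟩

/-- the single equation for a subformula `δ` -/
def eqCheck (L : List Formula) (n : ℕ) (t : List Bool × List Bool × List Bool)
    (δ : Formula) : Bool :=
  if ctor δ = 0 then true
  else if ctor δ = 1 then
    t.1.getD (L.idxOf δ) false == !(t.1.getD (L.idxOf (child1 δ)) false)
  else if ctor δ = 2 then
    t.1.getD (L.idxOf δ) false ==
      (t.1.getD (L.idxOf (child1 δ)) false && t.1.getD (L.idxOf (child2 δ)) false)
  else if ctor δ = 3 then
    t.1.getD (L.idxOf δ) false == t.2.1.getD (L.idxOf (child1 δ)) false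
  else
    t.1.getD (L.idxOf δ) false ==
      (if child1 δ = child2 δ then t.1.getD (L.idxOf (child1 δ)) false
       else t.2.2.getD ((L.idxOf (child1 δ)) * n + L.idxOf (child2 δ)) false)

/-- check that a boolean assignment satisfies all equations and makes all premises true -/
def satQ (L Γ : List Formula) (n : ℕ) (t : List Bool × List Bool × List Bool) : Bool :=
  L.all (eqCheck L n t) && Γ.all (fun γ => t.1.getD (L.idxOf γ) false)

/-- a disjunct of the normal form, given by boolean lists -/
def disjunct' (n : ℕ) (t : List Bool × List Bool × List Bool) : Formula :=
  bigConj
    (((List.range n).map fun i => lit (t.1.getD i false) (.atom i)) ++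
     ((List.range n).map fun i => lit (t.2.1.getD i false) (.next (.atom i))) ++
     ((List.range n).flatMap fun i =>
        ((List.range n).filter fun k => k != i).map fun k =>
          lit (t.2.2.getD (i*n+k) false) (.since (.atom i) (.atom k))))

/-- the variable list of a rule: all subformulas, conclusion first -/
def ruleList (r : Rule) : List Formula := subfs r.conclusion ++ r.premises.flatMap subfs

def premiseF (L Γ : List Formula) : Formula :=
  bigDisj (((triples L.length).filter (satQ L Γ L.length)).map (disjunct' L.length))

def badTriple : List Bool × List Bool × List Bool :=
  ([true,true],[true,true],[false,false,false,false])

def badRule : Rule := ⟨[bigDisj [disjunct' 2 badTriple]], .atom 0⟩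

def Fmap (r : Rule) : Rule :=
  if (triples (ruleList r).length).filter (satQ (ruleList r) r.premises (ruleList r).length) = []
  then badRule
  else ⟨[premiseF (ruleList r) r.premises], .atom 0⟩

/-! ### `disjunct'` vs `disjunct` -/

lemma map_coe_finRange_aux (n : ℕ) :
    (List.finRange n).map (fun i : Fin n => (i : ℕ)) = List.range n :=
  List.ext_getElem (by simp) (by simp)

lemma range_map_eq_finRange_map {β : Type*} (n : ℕ) (g : ℕ → β) :
    (List.range n).map g = (List.finRange n).map (fun i => g i.val) := by
  rw [← map_coe_finRange_aux, List.map_map]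
  rfl

lemma disjunct'_eq (n : ℕ) (t : List Bool × List Bool × List Bool) :
    disjunct' n t = disjunct n (fun i => t.1.getD i false) (fun i => t.2.1.getD i false)
      (fun i k => t.2.2.getD (i*n+k) false) := by
  unfold disjunct' disjunct
  congr 1
  congr 1
  · congr 1
    · exact range_map_eq_finRange_map n _
    · exact range_map_eq_finRange_map n _
  · rw [← map_coe_finRange_aux, List.flatMap_map]
    congr 1
    funext i
    rw [List.filter_map, List.map_map]
    have hpred : ((fun k => k != (i : ℕ)) ∘ (Fin.val : Fin n → ℕ)) = (fun k : Fin n => k != i) := by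
      funext k
      simp [Function.comp, bne, Fin.ext_iff]
    rw [hpred]
    simp [Function.comp]

lemma subfs_cons : ∀ φ : Formula, ∃ tl, subfs φ = φ :: tl := by
  intro φ; cases φ <;> exact ⟨_, rfl⟩

lemma ruleList_cons (r : Rule) : ∃ tl, ruleList r = r.conclusion :: tl := by
  obtain ⟨tl, htl⟩ := subfs_cons r.conclusion
  exact ⟨tl ++ r.premises.flatMap subfs, by rw [ruleList, htl]; rfl⟩

lemma ruleList_length_pos (r : Rule) : 0 < (ruleList r).length := by
  obtain ⟨tl, htl⟩ := ruleList_cons r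
  simp [htl]

lemma ruleList_closed {r : Rule} {δ : Formula} (h : δ ∈ ruleList r) :
    subfs δ ⊆ ruleList r := by
  rw [ruleList] at h ⊢
  rcases List.mem_append.mp h with h | h
  · exact fun x hx => List.mem_append.mpr (Or.inl (subfs_closed _ _ h hx))
  · rcases List.mem_flatMap.mp h with ⟨γ, hγ, hδ⟩
    exact fun x hx => List.mem_append.mpr
      (Or.inr (List.mem_flatMap.mpr ⟨γ, hγ, subfs_closed _ _ hδ hx⟩))

lemma child1_mem_subfs (δ : Formula) : child1 δ ∈ subfs δ := by
  cases δ <;> simp [child1, subfs, self_mem_subfs]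

lemma child2_mem_subfs (δ : Formula) : child2 δ ∈ subfs δ := by
  cases δ <;> simp [child2, subfs, self_mem_subfs]

lemma premises_subset_ruleList (r : Rule) : ∀ γ ∈ r.premises, γ ∈ ruleList r := by
  intro γ hγ
  rw [ruleList]
  exact List.mem_append.mpr (Or.inr (List.mem_flatMap.mpr ⟨γ, hγ, self_mem_subfs γ⟩))

lemma indexOf_inj {L : List Formula} {γ γ' : Formula} (hγ : γ ∈ L) (hγ' : γ' ∈ L)
    (h : L.idxOf γ = L.idxOf γ') : γ = γ' := by
  have h1 : L.idxOf γ < L.length := List.idxOf_lt_length_iff.mpr hγ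
  have e1 : L[L.idxOf γ] = γ := List.getElem_idxOf h1
  have h2 : L.idxOf γ' < L.length := List.idxOf_lt_length_iff.mpr hγ'
  have e2 : L[L.idxOf γ'] = γ' := List.getElem_idxOf h2
  rw [← e1, ← e2]
  congr 1

end RNFproof
namespace RNFproof

/-! ### Semantics lemmas -/

variable {m : ℕ} {V : ℕ → Set ℕ} {a : ℕ}

@[simp] lemma sat_atom {i : ℕ} : Sat m V (.atom i) a ↔ a ∈ V i := Iff.rfl
@[simp] lemma sat_neg {φ : Formula} : Sat m V (.neg φ) a ↔ ¬ Sat m V φ a := Iff.rfl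
@[simp] lemma sat_conj {φ ψ : Formula} :
    Sat m V (.conj φ ψ) a ↔ Sat m V φ a ∧ Sat m V ψ a := Iff.rfl
@[simp] lemma sat_next {φ : Formula} : Sat m V (.next φ) a ↔ Sat m V φ (a+1) := Iff.rfl
lemma sat_since {φ ψ : Formula} :
    Sat m V (.since φ ψ) a ↔
      ∃ b, a ≤ b ∧ b ≤ a + m ∧ Sat m V ψ b ∧ ∀ c, a ≤ c → c < b → Sat m V φ c := Iff.rfl

@[simp] lemma substF_atom {σ : ℕ → Formula} {i : ℕ} : substF σ (.atom i) = σ i := rfl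
@[simp] lemma substF_neg {σ : ℕ → Formula} {φ : Formula} :
    substF σ (.neg φ) = .neg (substF σ φ) := rfl
@[simp] lemma substF_conj {σ : ℕ → Formula} {φ ψ : Formula} :
    substF σ (.conj φ ψ) = .conj (substF σ φ) (substF σ ψ) := rfl
@[simp] lemma substF_next {σ : ℕ → Formula} {φ : Formula} :
    substF σ (.next φ) = .next (substF σ φ) := rfl
@[simp] lemma substF_since {σ : ℕ → Formula} {φ ψ : Formula} :
    substF σ (.since φ ψ) = .since (substF σ φ) (substF σ ψ) := rfl

lemma mem_Logic {φ : Formula} : φ ∈ Logic m ↔ ∀ (V : ℕ → Set ℕ) (a : ℕ), Sat m V φ a := by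
  simp [Logic, ValidIn]

lemma sat_substF_top (σ : ℕ → Formula) : Sat m V (substF σ Formula.top) a := by
  simp [Formula.top, Formula.imp]

lemma sat_substF_disj {σ : ℕ → Formula} {φ ψ : Formula} :
    Sat m V (substF σ (Formula.disj φ ψ)) a ↔
      Sat m V (substF σ φ) a ∨ Sat m V (substF σ ψ) a := by
  simp [Formula.disj]
  tauto

lemma substF_lit (σ : ℕ → Formula) (b : Bool) (φ : Formula) :
    substF σ (lit b φ) = lit b (substF σ φ) := by cases b <;> rfl

lemma sat_lit {b : Bool} {φ : Formula} :
    Sat m V (lit b φ) a ↔ (b = true ↔ Sat m V φ a) := by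
  cases b <;> simp [lit] <;> tauto

lemma sat_substF_bigConj {σ : ℕ → Formula} : ∀ {l : List Formula},
    Sat m V (substF σ (bigConj l)) a ↔ ∀ φ ∈ l, Sat m V (substF σ φ) a := by
  intro l
  induction l with
  | nil => simp [bigConj, sat_substF_top]
  | cons φ l ih =>
    cases l with
    | nil => simp [bigConj]
    | cons ψ l' =>
      rw [show bigConj (φ :: ψ :: l') = .conj φ (bigConj (ψ :: l')) from rfl]
      simp only [substF_conj, sat_conj, ih, List.forall_mem_cons]

lemma sat_substF_bigDisj {σ : ℕ → Formula} : ∀ {l : List Formula},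
    Sat m V (substF σ (bigDisj l)) a ↔ ∃ φ ∈ l, Sat m V (substF σ φ) a := by
  intro l
  induction l with
  | nil =>
    simp only [bigDisj, substF_neg, sat_neg]
    simp [sat_substF_top σ]
  | cons φ l ih =>
    cases l with
    | nil => simp [bigDisj]
    | cons ψ l' =>
      rw [show bigDisj (φ :: ψ :: l') = Formula.disj φ (bigDisj (ψ :: l')) from rfl]
      rw [sat_substF_disj]
      simp only [ih, List.exists_mem_cons_iff]

lemma sat_since_self {φ : Formula} : Sat m V (.since φ φ) a ↔ Sat m V φ a := by
  constructor
  · rintro ⟨b, hab, _, hb, hc⟩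
    rcases eq_or_lt_of_le hab with rfl | h
    · exact hb
    · exact hc a le_rfl h
  · intro h
    exact ⟨a, le_rfl, Nat.le_add_right _ _, h, fun c h1 h2 => absurd h2 (by omega)⟩

lemma sat_since_of_now {φ ψ : Formula} (h : Sat m V ψ a) : Sat m V (.since φ ψ) a :=
  ⟨a, le_rfl, Nat.le_add_right _ _, h, fun c h1 h2 => absurd h2 (by omega)⟩

lemma sat_since_congr {φ φ' ψ ψ' : Formula}
    (h1 : ∀ b, Sat m V φ b ↔ Sat m V φ' b) (h2 : ∀ b, Sat m V ψ b ↔ Sat m V ψ' b) :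
    Sat m V (.since φ ψ) a ↔ Sat m V (.since φ' ψ') a := by
  rw [sat_since, sat_since]
  constructor <;> rintro ⟨b, hab, hbm, hb, hc⟩
  · exact ⟨b, hab, hbm, (h2 b).mp hb, fun c u v => (h1 c).mp (hc c u v)⟩
  · exact ⟨b, hab, hbm, (h2 b).mpr hb, fun c u v => (h1 c).mpr (hc c u v)⟩

end RNFproof
namespace RNFproof

/-! ### Truth masks -/

variable {m : ℕ} {V : ℕ → Set ℕ} {a : ℕ}

open Classical in
/-- the actual truth values of the variables of `L` under `θ` at state `a` -/
noncomputable def tmask (θ : ℕ → Formula) (m : ℕ) (V : ℕ → Set ℕ) (a n : ℕ) :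
    List Bool × List Bool × List Bool :=
  ((List.range n).map (fun i => decide (Sat m V (θ i) a)),
   (List.range n).map (fun i => decide (Sat m V (θ i) (a+1))),
   (List.range (n*n)).map (fun p => decide (Sat m V (.since (θ (p / n)) (θ (p % n))) a)))

lemma tmask_mem_triples {θ : ℕ → Formula} {n : ℕ} : tmask θ m V a n ∈ triples n :=
  mem_triples.mpr (by simp [tmask])

open Classical in
lemma tmask_fst {θ : ℕ → Formula} {n i : ℕ} (hi : i < n) :
    (tmask θ m V a n).1.getD i false = decide (Sat m V (θ i) a) :=
  getD_map_range _ _ hi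

open Classical in
lemma tmask_snd1 {θ : ℕ → Formula} {n i : ℕ} (hi : i < n) :
    (tmask θ m V a n).2.1.getD i false = decide (Sat m V (θ i) (a+1)) :=
  getD_map_range _ _ hi

open Classical in
lemma tmask_snd2 {θ : ℕ → Formula} {n p : ℕ} (hp : p < n * n) :
    (tmask θ m V a n).2.2.getD p false =
      decide (Sat m V (.since (θ (p / n)) (θ (p % n))) a) :=
  getD_map_range _ _ hp

lemma mul_add_lt {i k n : ℕ} (hi : i < n) (hk : k < n) : i * n + k < n * n :=
  calc i * n + k < i * n + n := by omega
  _ = (i + 1) * n := by ring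
  _ ≤ n * n := Nat.mul_le_mul_right n hi

lemma mul_add_div {i k n : ℕ} (hn : 0 < n) (hk : k < n) : (i * n + k) / n = i := by
  rw [mul_comm, Nat.mul_add_div hn, Nat.div_eq_of_lt hk, add_zero]

lemma mul_add_mod {i k n : ℕ} (hk : k < n) : (i * n + k) % n = k := by
  rw [mul_comm, Nat.mul_add_mod, Nat.mod_eq_of_lt hk]

open Classical in
lemma tmask_since {θ : ℕ → Formula} {n i k : ℕ} (hn : 0 < n) (hi : i < n) (hk : k < n) :
    (tmask θ m V a n).2.2.getD (i * n + k) false =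
      decide (Sat m V (.since (θ i) (θ k)) a) := by
  rw [tmask_snd2 (mul_add_lt hi hk), mul_add_div hn hk, mul_add_mod hk]

/-! ### Satisfaction of a disjunct -/

lemma sat_substF_disjunct' {θ : ℕ → Formula} {n : ℕ} {t : List Bool × List Bool × List Bool} :
    Sat m V (substF θ (disjunct' n t)) a ↔
      (∀ i < n, (t.1.getD i false = true ↔ Sat m V (θ i) a)) ∧
      (∀ i < n, (t.2.1.getD i false = true ↔ Sat m V (θ i) (a+1))) ∧
      (∀ i < n, ∀ k < n, i ≠ k →
        (t.2.2.getD (i*n+k) false = true ↔ Sat m V (.since (θ i) (θ k)) a)) := by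
  rw [disjunct', sat_substF_bigConj]
  rw [List.forall_mem_append, List.forall_mem_append]
  have e1 : (∀ φ ∈ (List.range n).map fun i => lit (t.1.getD i false) (Formula.atom i),
      Sat m V (substF θ φ) a) ↔ ∀ i < n, (t.1.getD i false = true ↔ Sat m V (θ i) a) := by
    rw [List.forall_mem_map]
    constructor
    · intro h i hi
      have := h i (List.mem_range.mpr hi)
      rwa [substF_lit, substF_atom, sat_lit] at this
    · intro h i hi
      rw [substF_lit, substF_atom, sat_lit]
      exact h i (List.mem_range.mp hi)
  have e2 : (∀ φ ∈ (List.range n).map fun i => lit (t.2.1.getD i false) (.next (.atom i)),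
      Sat m V (substF θ φ) a) ↔
        ∀ i < n, (t.2.1.getD i false = true ↔ Sat m V (θ i) (a+1)) := by
    rw [List.forall_mem_map]
    constructor
    · intro h i hi
      have := h i (List.mem_range.mpr hi)
      rwa [substF_lit, substF_next, substF_atom, sat_lit, sat_next] at this
    · intro h i hi
      rw [substF_lit, substF_next, substF_atom, sat_lit, sat_next]
      exact h i (List.mem_range.mp hi)
  have e3 : (∀ φ ∈ (List.range n).flatMap fun i =>
        ((List.range n).filter fun k => k != i).map fun k =>
          lit (t.2.2.getD (i*n+k) false) (.since (.atom i) (.atom k)),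
      Sat m V (substF θ φ) a) ↔
        ∀ i < n, ∀ k < n, i ≠ k →
          (t.2.2.getD (i*n+k) false = true ↔ Sat m V (.since (θ i) (θ k)) a) := by
    constructor
    · intro h i hi k hk hik
      have hmem : lit (t.2.2.getD (i*n+k) false) (.since (.atom i) (.atom k)) ∈
          (List.range n).flatMap fun i =>
            ((List.range n).filter fun k => k != i).map fun k =>
              lit (t.2.2.getD (i*n+k) false) (.since (.atom i) (.atom k)) := by
        refine List.mem_flatMap.mpr ⟨i, List.mem_range.mpr hi, List.mem_map.mpr
          ⟨k, List.mem_filter.mpr ⟨List.mem_range.mpr hk, ?_⟩, rfl⟩⟩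
        simp [bne]
        exact fun h => hik h.symm
      have := h _ hmem
      rwa [substF_lit, substF_since, substF_atom, substF_atom, sat_lit] at this
    · intro h φ hφ
      rcases List.mem_flatMap.mp hφ with ⟨i, hi, hφ⟩
      rcases List.mem_map.mp hφ with ⟨k, hk, rfl⟩
      have hk' := List.mem_filter.mp hk
      rw [substF_lit, substF_since, substF_atom, substF_atom, sat_lit]
      refine h i (List.mem_range.mp hi) k (List.mem_range.mp hk'.1) ?_
      have := hk'.2
      simp [bne] at this
      exact fun h => this h.symm
  rw [e1, e2, e3]
  tauto

end RNFproof
namespace RNFproof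

variable {m : ℕ} {V : ℕ → Set ℕ} {a : ℕ}

/-- the semantic content of the equation attached to a subformula -/
def SemEq (θ : ℕ → Formula) (L : List Formula) (m : ℕ) (V : ℕ → Set ℕ) (a : ℕ) :
    Formula → Prop
  | .atom _ => True
  | .neg γ => Sat m V (θ (L.idxOf (Formula.neg γ))) a ↔ ¬ Sat m V (θ (L.idxOf γ)) a
  | .conj γ γ' => Sat m V (θ (L.idxOf (Formula.conj γ γ'))) a ↔
      (Sat m V (θ (L.idxOf γ)) a ∧ Sat m V (θ (L.idxOf γ')) a)
  | .next γ => Sat m V (θ (L.idxOf (Formula.next γ))) a ↔ Sat m V (θ (L.idxOf γ)) (a+1)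
  | .since γ γ' => Sat m V (θ (L.idxOf (Formula.since γ γ'))) a ↔
      Sat m V (.since (θ (L.idxOf γ)) (θ (L.idxOf γ'))) a

lemma bool_eq_of_iff {x y : Bool} (h : (x = true) ↔ (y = true)) : x = y := by
  cases x <;> cases y <;> simp_all

lemma beq_decide_iff {p q : Prop} [Decidable p] [Decidable q] :
    ((decide p == decide q) = true) ↔ (p ↔ q) := by
  by_cases hp : p <;> by_cases hq : q <;> simp [hp, hq]

lemma beq_not_decide_iff {p q : Prop} [Decidable p] [Decidable q] :
    ((decide p == !decide q) = true) ↔ (p ↔ ¬ q) := by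
  by_cases hp : p <;> by_cases hq : q <;> simp [hp, hq]

lemma beq_and_decide_iff {p q r : Prop} [Decidable p] [Decidable q] [Decidable r] :
    ((decide p == (decide q && decide r)) = true) ↔ (p ↔ q ∧ r) := by
  by_cases hp : p <;> by_cases hq : q <;> by_cases hr : r <;> simp [hp, hq, hr]


section EqCheckRed

variable {L : List Formula} {n : ℕ} {t : List Bool × List Bool × List Bool}

lemma eqCheck_atom {i : ℕ} : eqCheck L n t (.atom i) = true := by
  simp [eqCheck]

lemma eqCheck_neg' {γ : Formula} : eqCheck L n t (.neg γ) =
    (t.1.getD (L.idxOf (Formula.neg γ)) false == !(t.1.getD (L.idxOf γ) false)) := by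
  simp [eqCheck, child1]

lemma eqCheck_conj' {γ γ' : Formula} : eqCheck L n t (.conj γ γ') =
    (t.1.getD (L.idxOf (Formula.conj γ γ')) false ==
      (t.1.getD (L.idxOf γ) false && t.1.getD (L.idxOf γ') false)) := by
  simp [eqCheck, child1, child2]

lemma eqCheck_next' {γ : Formula} : eqCheck L n t (.next γ) =
    (t.1.getD (L.idxOf (Formula.next γ)) false == t.2.1.getD (L.idxOf γ) false) := by
  simp [eqCheck, child1]

lemma eqCheck_since' {γ γ' : Formula} : eqCheck L n t (.since γ γ') =
    (t.1.getD (L.idxOf (Formula.since γ γ')) false ==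
      (if γ = γ' then t.1.getD (L.idxOf γ) false
       else t.2.2.getD (L.idxOf γ * n + L.idxOf γ') false)) := by
  simp [eqCheck, child1, child2]

end EqCheckRed

section EqCheck

variable {L : List Formula} {n : ℕ} {θ : ℕ → Formula}

open Classical

lemma eqCheck_tmask_iff (hn : 0 < n) (hL : n = L.length) {δ : Formula} (hδ : δ ∈ L)
    (hcl : subfs δ ⊆ L) :
    (eqCheck L n (tmask θ m V a n) δ = true) ↔ SemEq θ L m V a δ := by
  have hidx : ∀ γ ∈ L, L.idxOf γ < n := fun γ hγ =>
    hL ▸ List.idxOf_lt_length_iff.mpr hγ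
  cases δ with
  | atom i => simp [eqCheck_atom, SemEq]
  | neg γ =>
    have hγ : γ ∈ L := hcl (by simp [subfs, self_mem_subfs])
    rw [eqCheck_neg', tmask_fst (hidx _ hδ), tmask_fst (hidx _ hγ), beq_not_decide_iff]
    simp [SemEq]
  | conj γ γ' =>
    have hγ : γ ∈ L := hcl (by simp [subfs, self_mem_subfs])
    have hγ' : γ' ∈ L := hcl (by simp [subfs, self_mem_subfs])
    rw [eqCheck_conj', tmask_fst (hidx _ hδ), tmask_fst (hidx _ hγ), tmask_fst (hidx _ hγ'),
      beq_and_decide_iff]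
    simp [SemEq]
  | next γ =>
    have hγ : γ ∈ L := hcl (by simp [subfs, self_mem_subfs])
    rw [eqCheck_next', tmask_fst (hidx _ hδ), tmask_snd1 (hidx _ hγ), beq_decide_iff]
    simp [SemEq]
  | since γ γ' =>
    have hγ : γ ∈ L := hcl (by simp [subfs, self_mem_subfs])
    have hγ' : γ' ∈ L := hcl (by simp [subfs, self_mem_subfs])
    rw [eqCheck_since']
    by_cases hγγ : γ = γ'
    · subst hγγ
      rw [if_pos rfl, tmask_fst (hidx _ hδ), tmask_fst (hidx _ hγ), beq_decide_iff]
      rw [SemEq]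
      constructor
      · intro h; rw [h, sat_since_self]
      · intro h; rw [h, sat_since_self]
    · rw [if_neg hγγ, tmask_fst (hidx _ hδ),
        tmask_since hn (hidx _ hγ) (hidx _ hγ'), beq_decide_iff]
      simp [SemEq]

lemma eqCheck_eq_of_agree (hn : 0 < n) (hL : n = L.length)
    {t t' : List Bool × List Bool × List Bool}
    (h0 : ∀ i < n, t.1.getD i false = t'.1.getD i false)
    (h1 : ∀ i < n, t.2.1.getD i false = t'.2.1.getD i false)
    (h2 : ∀ i k, i < n → k < n → i ≠ k →
      t.2.2.getD (i*n+k) false = t'.2.2.getD (i*n+k) false)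
    {δ : Formula} (hδ : δ ∈ L) (hcl : subfs δ ⊆ L) :
    eqCheck L n t δ = eqCheck L n t' δ := by
  have hidx : ∀ γ ∈ L, L.idxOf γ < n := fun γ hγ =>
    hL ▸ List.idxOf_lt_length_iff.mpr hγ
  cases δ with
  | atom i => simp [eqCheck_atom]
  | neg γ =>
    have hγ : γ ∈ L := hcl (by simp [subfs, self_mem_subfs])
    rw [eqCheck_neg', eqCheck_neg', h0 _ (hidx _ hδ), h0 _ (hidx _ hγ)]
  | conj γ γ' =>
    have hγ : γ ∈ L := hcl (by simp [subfs, self_mem_subfs])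
    have hγ' : γ' ∈ L := hcl (by simp [subfs, self_mem_subfs])
    rw [eqCheck_conj', eqCheck_conj', h0 _ (hidx _ hδ), h0 _ (hidx _ hγ), h0 _ (hidx _ hγ')]
  | next γ =>
    have hγ : γ ∈ L := hcl (by simp [subfs, self_mem_subfs])
    rw [eqCheck_next', eqCheck_next', h0 _ (hidx _ hδ), h1 _ (hidx _ hγ)]
  | since γ γ' =>
    have hγ : γ ∈ L := hcl (by simp [subfs, self_mem_subfs])
    have hγ' : γ' ∈ L := hcl (by simp [subfs, self_mem_subfs])
    rw [eqCheck_since', eqCheck_since', h0 _ (hidx _ hδ)]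
    by_cases hγγ : γ = γ'
    · subst hγγ
      rw [if_pos rfl, if_pos rfl, h0 _ (hidx _ hγ)]
    · have hne : L.idxOf γ ≠ L.idxOf γ' := fun h => hγγ (indexOf_inj hγ hγ' h)
      rw [if_neg hγγ, if_neg hγγ, h2 _ _ (hidx _ hγ) (hidx _ hγ') hne]

end EqCheck

section SatQ

variable {L Γ : List Formula} {n : ℕ} {θ : ℕ → Formula}

open Classical

lemma satQ_tmask_iff (hn : 0 < n) (hL : n = L.length)
    (hcl : ∀ δ ∈ L, subfs δ ⊆ L) (hΓ : ∀ γ ∈ Γ, γ ∈ L) :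
    (satQ L Γ n (tmask θ m V a n) = true) ↔
      ((∀ δ ∈ L, SemEq θ L m V a δ) ∧ ∀ γ ∈ Γ, Sat m V (θ (L.idxOf γ)) a) := by
  have hidx : ∀ γ ∈ L, L.idxOf γ < n := fun γ hγ =>
    hL ▸ List.idxOf_lt_length_iff.mpr hγ
  rw [satQ, Bool.and_eq_true, List.all_eq_true, List.all_eq_true]
  constructor
  · rintro ⟨h1, h2⟩
    refine ⟨fun δ hδ => (eqCheck_tmask_iff hn hL hδ (hcl δ hδ)).mp (h1 δ hδ), fun γ hγ => ?_⟩
    have := h2 γ hγ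
    rwa [tmask_fst (hidx _ (hΓ γ hγ)), decide_eq_true_eq] at this
  · rintro ⟨h1, h2⟩
    refine ⟨fun δ hδ => (eqCheck_tmask_iff hn hL hδ (hcl δ hδ)).mpr (h1 δ hδ), fun γ hγ => ?_⟩
    rw [tmask_fst (hidx _ (hΓ γ hγ)), decide_eq_true_eq]
    exact h2 γ hγ

lemma satQ_eq_of_agree (hn : 0 < n) (hL : n = L.length)
    (hcl : ∀ δ ∈ L, subfs δ ⊆ L) (hΓ : ∀ γ ∈ Γ, γ ∈ L)
    {t t' : List Bool × List Bool × List Bool}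
    (h0 : ∀ i < n, t.1.getD i false = t'.1.getD i false)
    (h1 : ∀ i < n, t.2.1.getD i false = t'.2.1.getD i false)
    (h2 : ∀ i k, i < n → k < n → i ≠ k →
      t.2.2.getD (i*n+k) false = t'.2.2.getD (i*n+k) false) :
    satQ L Γ n t = satQ L Γ n t' := by
  have hidx : ∀ γ ∈ L, L.idxOf γ < n := fun γ hγ =>
    hL ▸ List.idxOf_lt_length_iff.mpr hγ
  unfold satQ
  congr 1
  · apply bool_eq_of_iff
    rw [List.all_eq_true, List.all_eq_true]
    constructor <;> intro h δ hδ
    · rw [← eqCheck_eq_of_agree hn hL h0 h1 h2 hδ (hcl δ hδ)]; exact h δ hδ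
    · rw [eqCheck_eq_of_agree hn hL h0 h1 h2 hδ (hcl δ hδ)]; exact h δ hδ
  · apply bool_eq_of_iff
    rw [List.all_eq_true, List.all_eq_true]
    constructor <;> intro h γ hγ
    · rw [← h0 _ (hidx _ (hΓ γ hγ))]; exact h γ hγ
    · rw [h0 _ (hidx _ (hΓ γ hγ))]; exact h γ hγ

/-- The master characterization: the substituted normal-form premise is true at a state
iff the actual truth-value assignment passes the check `satQ`. -/
lemma sat_substF_premiseF (hn : 0 < L.length)
    (hcl : ∀ δ ∈ L, subfs δ ⊆ L) (hΓ : ∀ γ ∈ Γ, γ ∈ L) :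
    Sat m V (substF θ (premiseF L Γ)) a ↔
      satQ L Γ L.length (tmask θ m V a L.length) = true := by
  set n := L.length with hLn
  rw [premiseF, sat_substF_bigDisj]
  constructor
  · rintro ⟨φ, hφ, hsat⟩
    rcases List.mem_map.mp hφ with ⟨t, ht, rfl⟩
    have ht' := List.mem_filter.mp ht
    rcases sat_substF_disjunct'.mp hsat with ⟨c0, c1, c2⟩
    have hagree0 : ∀ i < n, t.1.getD i false = (tmask θ m V a n).1.getD i false := by
      intro i hi
      rw [tmask_fst hi]
      exact bool_eq_of_iff (by rw [decide_eq_true_eq]; exact c0 i hi)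
    have hagree1 : ∀ i < n, t.2.1.getD i false = (tmask θ m V a n).2.1.getD i false := by
      intro i hi
      rw [tmask_snd1 hi]
      exact bool_eq_of_iff (by rw [decide_eq_true_eq]; exact c1 i hi)
    have hagree2 : ∀ i k, i < n → k < n → i ≠ k →
        t.2.2.getD (i*n+k) false = (tmask θ m V a n).2.2.getD (i*n+k) false := by
      intro i k hi hk hik
      rw [tmask_since hn hi hk]
      exact bool_eq_of_iff (by rw [decide_eq_true_eq]; exact c2 i hi k hk hik)
    rw [← satQ_eq_of_agree hn hLn hcl hΓ hagree0 hagree1 hagree2]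
    exact ht'.2
  · intro h
    refine ⟨disjunct' n (tmask θ m V a n), ?_, ?_⟩
    · exact List.mem_map.mpr ⟨tmask θ m V a n,
        List.mem_filter.mpr ⟨tmask_mem_triples, h⟩, rfl⟩
    · apply sat_substF_disjunct'.mpr
      refine ⟨fun i hi => ?_, fun i hi => ?_, fun i hi k hk hik => ?_⟩
      · rw [tmask_fst hi]; simp
      · rw [tmask_snd1 hi]; simp
      · rw [tmask_since hn hi hk]; simp

end SatQ

end RNFproof
namespace RNFproof

variable {m : ℕ}

/-! ### Correctness -/

lemma badRule_premise_unsat (τ : ℕ → Formula) (V : ℕ → Set ℕ) (a : ℕ) :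
    ¬ Sat m V (substF τ (bigDisj [disjunct' 2 badTriple])) a := by
  intro h
  rw [sat_substF_bigDisj] at h
  rcases h with ⟨φ, hφ, hsat⟩
  simp only [List.mem_singleton] at hφ
  subst hφ
  rcases sat_substF_disjunct'.mp hsat with ⟨c0, _, c2⟩
  have h1 : Sat m V (τ 1) a := by
    have := c0 1 (by norm_num)
    simpa [badTriple] using this
  have h2 : ¬ Sat m V (.since (τ 0) (τ 1)) a := by
    have := c2 0 (by norm_num) 1 (by norm_num) (by norm_num)
    simp [badTriple] at this
    exact this
  exact h2 (sat_since_of_now h1)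

lemma badRule_admissible : Admissible m badRule := by
  intro σ h
  exfalso
  have hp := h (bigDisj [disjunct' 2 badTriple]) (by simp [badRule])
  rw [mem_Logic] at hp
  exact badRule_premise_unsat σ (fun _ => ∅) 0 (hp _ 0)

lemma badRule_isRNF : IsRNF badRule := by
  refine ⟨2, by norm_num,
    [((fun i => badTriple.1.getD i false), (fun i => badTriple.2.1.getD i false),
      (fun i k => badTriple.2.2.getD (i*(2:ℕ)+k) false))], by simp, ?_, rfl⟩
  simp only [badRule, List.map_cons, List.map_nil]
  rw [disjunct'_eq]

section MainCorrectness

variable {r : Rule}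

open Classical

/-- the substitution used in the forward direction -/
def sigma' (σ : ℕ → Formula) (L : List Formula) (j : ℕ) : Formula :=
  substF σ (L.getD j (.atom 0))

lemma sigma'_indexOf {σ : ℕ → Formula} {L : List Formula} {δ : Formula} (hδ : δ ∈ L) :
    sigma' σ L (L.idxOf δ) = substF σ δ := by
  rw [sigma', List.getD_eq_getElem _ _ (List.idxOf_lt_length_iff.mpr hδ),
    List.getElem_idxOf]

lemma semEq_sigma' {σ : ℕ → Formula} {L : List Formula} {V : ℕ → Set ℕ} {a : ℕ}
    {δ : Formula} (hδ : δ ∈ L) (hcl : subfs δ ⊆ L) :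
    SemEq (sigma' σ L) L m V a δ := by
  cases δ with
  | atom i => trivial
  | neg γ =>
    have hγ : γ ∈ L := hcl (by simp [subfs, self_mem_subfs])
    rw [SemEq, sigma'_indexOf hδ, sigma'_indexOf hγ, substF_neg, sat_neg]
  | conj γ γ' =>
    have hγ : γ ∈ L := hcl (by simp [subfs, self_mem_subfs])
    have hγ' : γ' ∈ L := hcl (by simp [subfs, self_mem_subfs])
    rw [SemEq, sigma'_indexOf hδ, sigma'_indexOf hγ, sigma'_indexOf hγ', substF_conj, sat_conj]
  | next γ =>
    have hγ : γ ∈ L := hcl (by simp [subfs, self_mem_subfs])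
    rw [SemEq, sigma'_indexOf hδ, sigma'_indexOf hγ, substF_next, sat_next]
  | since γ γ' =>
    have hγ : γ ∈ L := hcl (by simp [subfs, self_mem_subfs])
    have hγ' : γ' ∈ L := hcl (by simp [subfs, self_mem_subfs])
    rw [SemEq, sigma'_indexOf hδ, sigma'_indexOf hγ, sigma'_indexOf hγ', substF_since]

lemma satQ_tmask_sigma' {σ : ℕ → Formula} (hprem : ∀ γ ∈ r.premises, substF σ γ ∈ Logic m)
    (V : ℕ → Set ℕ) (a : ℕ) :
    satQ (ruleList r) r.premises (ruleList r).length
      (tmask (sigma' σ (ruleList r)) m V a (ruleList r).length) = true := by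
  set L := ruleList r
  apply (satQ_tmask_iff (ruleList_length_pos r) rfl
    (fun δ hδ => ruleList_closed hδ) (premises_subset_ruleList r)).mpr
  constructor
  · exact fun δ hδ => semEq_sigma' hδ (ruleList_closed hδ)
  · intro γ hγ
    rw [sigma'_indexOf (premises_subset_ruleList r γ hγ)]
    exact mem_Logic.mp (hprem γ hγ) V a

/-- In the degenerate case the original rule is vacuously admissible. -/
lemma admissible_of_empty
    (hds : (triples (ruleList r).length).filter
      (satQ (ruleList r) r.premises (ruleList r).length) = []) :
    Admissible m r := by
  intro σ hprem
  exfalso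
  have hQ := satQ_tmask_sigma' (r := r) (σ := σ) (fun γ hγ => hprem γ hγ) (fun _ => ∅) 0
  have hmem : tmask (sigma' σ (ruleList r)) m (fun _ => ∅) 0 (ruleList r).length ∈
      (triples (ruleList r).length).filter
        (satQ (ruleList r) r.premises (ruleList r).length) :=
    List.mem_filter.mpr ⟨tmask_mem_triples, hQ⟩
  rw [hds] at hmem
  exact List.not_mem_nil hmem

lemma ruleList_getD_zero (r : Rule) : (ruleList r).getD 0 (.atom 0) = r.conclusion := by
  obtain ⟨tl, htl⟩ := ruleList_cons r
  rw [htl]; rfl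

lemma ruleList_indexOf_conclusion (r : Rule) :
    (ruleList r).idxOf r.conclusion = 0 := by
  obtain ⟨tl, htl⟩ := ruleList_cons r
  rw [htl, List.idxOf_cons_self]

lemma conclusion_mem_ruleList (r : Rule) : r.conclusion ∈ ruleList r := by
  obtain ⟨tl, htl⟩ := ruleList_cons r
  rw [htl]; simp

/-- Forward direction: admissibility of the normal form implies admissibility of `r`. -/
lemma admissible_of_admissible_Fmap (hF : Admissible m (Fmap r)) : Admissible m r := by
  by_cases hds : (triples (ruleList r).length).filter
      (satQ (ruleList r) r.premises (ruleList r).length) = []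
  · exact admissible_of_empty hds
  · intro σ hprem
    have hFr : Fmap r = ⟨[premiseF (ruleList r) r.premises], .atom 0⟩ := by
      rw [Fmap, if_neg hds]
    have hpremF : substF (sigma' σ (ruleList r)) (premiseF (ruleList r) r.premises)
        ∈ Logic m := by
      rw [mem_Logic]
      intro V a
      rw [sat_substF_premiseF (ruleList_length_pos r)
        (fun δ hδ => ruleList_closed hδ) (premises_subset_ruleList r)]
      exact satQ_tmask_sigma' hprem V a
    have := hF (sigma' σ (ruleList r)) (by
      intro φ hφ
      rw [hFr] at hφ
      simp only [List.mem_singleton] at hφ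
      subst hφ
      exact hpremF)
    rw [hFr] at this
    have this2 : substF (sigma' σ (ruleList r)) (.atom 0) ∈ Logic m := this
    rwa [substF_atom, sigma', ruleList_getD_zero r] at this2

/-- the substitution used in the backward direction -/
def sigma0 (τ : ℕ → Formula) (L : List Formula) (p : ℕ) : Formula :=
  τ (L.idxOf (.atom p))

lemma key_equiv {τ : ℕ → Formula}
    (HSem : ∀ (V : ℕ → Set ℕ) (a : ℕ), ∀ δ ∈ ruleList r, SemEq τ (ruleList r) m V a δ) :
    ∀ δ, δ ∈ ruleList r → ∀ (V : ℕ → Set ℕ) (a : ℕ),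
      (Sat m V (substF (sigma0 τ (ruleList r)) δ) a ↔
        Sat m V (τ ((ruleList r).idxOf δ)) a) := by
  set L := ruleList r with hLdef
  intro δ
  induction δ with
  | atom p => intro _ V a; rw [substF_atom]; rfl
  | neg γ ih =>
    intro hδ V a
    have hγ : γ ∈ L := ruleList_closed hδ (by simp [subfs, self_mem_subfs])
    have hsem := HSem V a _ hδ
    rw [SemEq] at hsem
    rw [substF_neg, sat_neg, ih hγ V a, hsem]
  | conj γ γ' ih ih' =>
    intro hδ V a
    have hγ : γ ∈ L := ruleList_closed hδ (by simp [subfs, self_mem_subfs])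
    have hγ' : γ' ∈ L := ruleList_closed hδ (by simp [subfs, self_mem_subfs])
    have hsem := HSem V a _ hδ
    rw [SemEq] at hsem
    rw [substF_conj, sat_conj, ih hγ V a, ih' hγ' V a, hsem]
  | next γ ih =>
    intro hδ V a
    have hγ : γ ∈ L := ruleList_closed hδ (by simp [subfs, self_mem_subfs])
    have hsem := HSem V a _ hδ
    rw [SemEq] at hsem
    rw [substF_next, sat_next, ih hγ V (a+1), hsem]
  | since γ γ' ih ih' =>
    intro hδ V a
    have hγ : γ ∈ L := ruleList_closed hδ (by simp [subfs, self_mem_subfs])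
    have hγ' : γ' ∈ L := ruleList_closed hδ (by simp [subfs, self_mem_subfs])
    have hsem := HSem V a _ hδ
    rw [SemEq] at hsem
    rw [substF_since, hsem,
      sat_since_congr (fun b => ih hγ V b) (fun b => ih' hγ' V b)]

/-- Backward direction: admissibility of `r` implies admissibility of the normal form. -/
lemma admissible_Fmap_of_admissible (hr : Admissible m r) : Admissible m (Fmap r) := by
  by_cases hds : (triples (ruleList r).length).filter
      (satQ (ruleList r) r.premises (ruleList r).length) = []
  · rw [Fmap, if_pos hds]
    exact badRule_admissible
  · rw [Fmap, if_neg hds]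
    intro τ hprem
    have hpremF : substF τ (premiseF (ruleList r) r.premises) ∈ Logic m :=
      hprem _ (by simp)
    have HQ : ∀ (V : ℕ → Set ℕ) (a : ℕ),
        satQ (ruleList r) r.premises (ruleList r).length
          (tmask τ m V a (ruleList r).length) = true := by
      intro V a
      rw [← sat_substF_premiseF (ruleList_length_pos r)
        (fun δ hδ => ruleList_closed hδ) (premises_subset_ruleList r)]
      exact mem_Logic.mp hpremF V a
    have Hiff := fun (V : ℕ → Set ℕ) (a : ℕ) => (satQ_tmask_iff (θ := τ)
      (ruleList_length_pos r) rfl (fun δ hδ => ruleList_closed hδ)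
      (premises_subset_ruleList r)).mp (HQ V a)
    have HSem : ∀ (V : ℕ → Set ℕ) (a : ℕ), ∀ δ ∈ ruleList r, SemEq τ (ruleList r) m V a δ :=
      fun V a => (Hiff V a).1
    have Hbits : ∀ (V : ℕ → Set ℕ) (a : ℕ), ∀ γ ∈ r.premises,
        Sat m V (τ ((ruleList r).idxOf γ)) a := fun V a => (Hiff V a).2
    have hkey := key_equiv (m := m) (r := r) HSem
    have hσprem : ∀ γ ∈ r.premises, substF (sigma0 τ (ruleList r)) γ ∈ Logic m := by
      intro γ hγ
      rw [mem_Logic]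
      intro V a
      rw [hkey γ (premises_subset_ruleList r γ hγ) V a]
      exact Hbits V a γ hγ
    have hconc := hr (sigma0 τ (ruleList r)) hσprem
    rw [mem_Logic]
    intro V a
    have := mem_Logic.mp hconc V a
    rw [hkey r.conclusion (conclusion_mem_ruleList r) V a,
      ruleList_indexOf_conclusion r] at this
    exact this

lemma Fmap_isRNF (r : Rule) : IsRNF (Fmap r) := by
  by_cases hds : (triples (ruleList r).length).filter
      (satQ (ruleList r) r.premises (ruleList r).length) = []
  · rw [Fmap, if_pos hds]
    exact badRule_isRNF
  · rw [Fmap, if_neg hds]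
    refine ⟨(ruleList r).length, ruleList_length_pos r,
      ((triples (ruleList r).length).filter
        (satQ (ruleList r) r.premises (ruleList r).length)).map
        (fun t => ((fun i => t.1.getD i false), (fun i => t.2.1.getD i false),
          (fun i k => t.2.2.getD (i*(ruleList r).length+k) false))),
      by simpa using hds, ?_, rfl⟩
    show [premiseF (ruleList r) r.premises] = _
    rw [premiseF, List.map_map]
    congr 1
    congr 1
    exact List.map_congr_left fun t _ => disjunct'_eq _ t

end MainCorrectness

end RNFproof
namespace RNFproof

open Primrec

section Helpers

variable {α : Type*} {β : Type*} [Primcodable α] [Primcodable β]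

lemma all_eq_foldr (l : List β) (p : β → Bool) :
    l.all p = l.foldr (fun x b => p x && b) true := by
  induction l with
  | nil => rfl
  | cons x xs ih => simp [List.all_cons, ih]

lemma primrec_list_all {f : α → List β} {p : α → β → Bool}
    (hf : Primrec f) (hp : Primrec₂ p) : Primrec fun a => (f a).all (p a) := by
  have hand : Primrec₂ (fun a b : Bool => a && b) := Primrec.dom_bool₂ _
  have h : Primrec fun a => (f a).foldr (fun x b => p a x && b) true :=
    list_foldr (h := fun a (q : β × Bool) => p a q.1 && q.2) hf (const true)
      (Primrec₂.mk (hand.comp (hp.comp fst (fst.comp snd)) (snd.comp snd)))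
  exact h.of_eq fun a => (all_eq_foldr _ _).symm

lemma filter_eq_flatMap (l : List β) (p : β → Bool) :
    l.filter p = l.flatMap fun b => if p b then [b] else [] := by
  induction l with
  | nil => rfl
  | cons x xs ih =>
    by_cases h : p x <;> simp [List.filter_cons, h, ih]

lemma primrec_list_filter {f : α → List β} {p : α → β → Bool}
    (hf : Primrec f) (hp : Primrec₂ p) : Primrec fun a => (f a).filter (p a) := by
  have h : Primrec fun a => (f a).flatMap fun b => if p a b then [b] else [] := by
    apply list_flatMap hf
    apply Primrec₂.mk
    have hc : PrimrecPred fun q : α × β => p q.1 q.2 = true :=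
      PrimrecRel.comp Primrec.eq (Primrec₂.mk.{_,_,0} hp : Primrec _) (const true)
    exact Primrec.ite hc (list_cons.comp snd (const [])) (const [])
  exact h.of_eq fun a => (filter_eq_flatMap _ _).symm

end Helpers

/-! ### Primrec of the construction -/

lemma primrec_allBools : Primrec allBools := by
  have hstep : Primrec₂ fun (_ : ℕ) (l : List (List Bool)) =>
      l.flatMap fun x => [true :: x, false :: x] := by
    apply Primrec₂.mk
    apply list_flatMap snd
    apply Primrec₂.mk
    exact list_cons.comp (list_cons.comp (const true) snd)
      (list_cons.comp (list_cons.comp (const false) snd) (const []))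
  have h : Primrec fun n => Nat.rec (motive := fun _ => List (List Bool)) [[]]
      (fun _ ih => ih.flatMap fun x => [true :: x, false :: x]) n :=
    nat_rec₁ _ hstep
  apply h.of_eq
  intro n
  induction n with
  | zero => rfl
  | succ k ih => simp only [allBools]; rw [← ih]

lemma primrec_triples : Primrec triples := by
  unfold triples
  apply list_flatMap primrec_allBools
  apply Primrec₂.mk
  apply list_flatMap (primrec_allBools.comp fst)
  apply Primrec₂.mk
  apply list_map (primrec_allBools.comp
    (nat_mul.comp (fst.comp fst) (fst.comp fst)))
  apply Primrec₂.mk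
  exact (snd.comp (fst.comp fst)).pair ((snd.comp fst).pair snd)

end RNFproof
namespace RNFproof

open Primrec

set_option maxHeartbeats 2000000

/-! ### Primrec of bigConj/bigDisj -/

def bigConjAux (l : List Formula) : Option Formula :=
  l.foldr (fun φ acc => some (acc.elim φ (fun ψ => Formula.conj φ ψ))) none

lemma bigConjAux_cons (x : Formula) (xs : List Formula) :
    bigConjAux (x :: xs) = some (bigConj (x :: xs)) := by
  induction xs generalizing x with
  | nil => rfl
  | cons y ys ih =>
    show some (Option.elim (bigConjAux (y :: ys)) x _) = _
    rw [ih y]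
    rfl

lemma bigConj_eq_getD (l : List Formula) : bigConj l = (bigConjAux l).getD Formula.top := by
  cases l with
  | nil => rfl
  | cons x xs => rw [bigConjAux_cons]; rfl

lemma primrec_bigConjAux : Primrec bigConjAux := by
  have hH : Primrec₂ (fun (_ : List Formula) (q : Formula × Option Formula) =>
      some (q.2.elim q.1 (fun ψ => Formula.conj q.1 ψ))) := by
    apply Primrec₂.mk
    apply option_some.comp
    have ho : Primrec fun w : List Formula × Formula × Option Formula => w.2.2 :=
      snd.comp snd
    have hf : Primrec fun w : List Formula × Formula × Option Formula => w.2.1 :=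
      fst.comp snd
    have hco := option_casesOn ho hf
      (g := fun w ψ => Formula.conj w.2.1 ψ)
      (Primrec₂.mk (primrec_conj.comp (fst.comp (snd.comp fst)) snd))
    exact hco.of_eq fun w => by rcases w with ⟨_, _, o⟩; cases o <;> rfl
  have h := list_foldr (f := fun l : List Formula => l) .id (const none) hH
  exact h.of_eq fun l => rfl

lemma primrec_bigConj : Primrec bigConj :=
  (option_getD.comp primrec_bigConjAux (const Formula.top)).of_eq fun l =>
    (bigConj_eq_getD l).symm

def bigDisjAux (l : List Formula) : Option Formula :=
  l.foldr (fun φ acc => some (acc.elim φ (fun ψ => Formula.disj φ ψ))) none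

lemma bigDisjAux_cons (x : Formula) (xs : List Formula) :
    bigDisjAux (x :: xs) = some (bigDisj (x :: xs)) := by
  induction xs generalizing x with
  | nil => rfl
  | cons y ys ih =>
    show some (Option.elim (bigDisjAux (y :: ys)) x _) = _
    rw [ih y]
    rfl

lemma bigDisj_eq_getD (l : List Formula) :
    bigDisj l = (bigDisjAux l).getD (.neg Formula.top) := by
  cases l with
  | nil => rfl
  | cons x xs => rw [bigDisjAux_cons]; rfl

lemma primrec_disjF : Primrec₂ Formula.disj := by
  apply Primrec₂.mk
  exact primrec_neg.comp (primrec_conj.comp (primrec_neg.comp fst) (primrec_neg.comp snd))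

lemma primrec_bigDisjAux : Primrec bigDisjAux := by
  have hH : Primrec₂ (fun (_ : List Formula) (q : Formula × Option Formula) =>
      some (q.2.elim q.1 (fun ψ => Formula.disj q.1 ψ))) := by
    apply Primrec₂.mk
    apply option_some.comp
    have ho : Primrec fun w : List Formula × Formula × Option Formula => w.2.2 :=
      snd.comp snd
    have hf : Primrec fun w : List Formula × Formula × Option Formula => w.2.1 :=
      fst.comp snd
    have hco := option_casesOn ho hf
      (g := fun w ψ => Formula.disj w.2.1 ψ)
      (Primrec₂.mk (primrec_disjF.comp (fst.comp (snd.comp fst)) snd))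
    exact hco.of_eq fun w => by rcases w with ⟨_, _, o⟩; cases o <;> rfl
  have h := list_foldr (f := fun l : List Formula => l) .id (const none) hH
  exact h.of_eq fun l => rfl

lemma primrec_bigDisj : Primrec bigDisj :=
  (option_getD.comp primrec_bigDisjAux (const (.neg Formula.top))).of_eq fun l =>
    (bigDisj_eq_getD l).symm

lemma primrec_lit : Primrec₂ lit := by
  apply Primrec₂.mk
  have hc : PrimrecPred fun q : Bool × Formula => q.1 = true :=
    PrimrecRel.comp Primrec.eq fst (const true)
  have h : Primrec fun q : Bool × Formula => if q.1 = true then q.2 else .neg q.2 :=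
    Primrec.ite hc snd (primrec_neg.comp snd)
  exact h.of_eq fun q => by cases hq : q.1 <;> simp [lit, hq]

/-! ### Primrec of disjunct' -/

section Disjunct

abbrev TT := List Bool × List Bool × List Bool

lemma primrec_disjunct' : Primrec₂ disjunct' := by
  apply Primrec₂.mk
  set A := ℕ × TT
  have hn : Primrec fun a : A => a.1 := fst
  have ht1 : Primrec fun a : A => a.2.1 := fst.comp snd
  have ht2 : Primrec fun a : A => a.2.2.1 := fst.comp (snd.comp snd)
  have ht3 : Primrec fun a : A => a.2.2.2 := snd.comp (snd.comp snd)
  have seg1 : Primrec fun a : A =>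
      (List.range a.1).map fun i => lit (a.2.1.getD i false) (.atom i) := by
    apply list_map (list_range.comp hn)
    apply Primrec₂.mk
    exact primrec_lit.comp
      ((list_getD false).comp (fst.comp (snd.comp fst)) snd)
      (primrec_atom.comp snd)
  have seg2 : Primrec fun a : A =>
      (List.range a.1).map fun i => lit (a.2.2.1.getD i false) (.next (.atom i)) := by
    apply list_map (list_range.comp hn)
    apply Primrec₂.mk
    exact primrec_lit.comp
      ((list_getD false).comp (fst.comp (snd.comp (snd.comp fst))) snd)
      (primrec_next.comp (primrec_atom.comp snd))
  have seg3 : Primrec fun a : A =>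
      (List.range a.1).flatMap fun i =>
        ((List.range a.1).filter fun k => k != i).map fun k =>
          lit (a.2.2.2.getD (i*a.1+k) false) (.since (.atom i) (.atom k)) := by
    apply list_flatMap (list_range.comp hn)
    apply Primrec₂.mk
    have hfil : Primrec fun q : A × ℕ => (List.range q.1.1).filter fun k => k != q.2 := by
      apply primrec_list_filter (list_range.comp (fst.comp fst))
      apply Primrec₂.mk
      exact (Primrec.dom_bool Bool.not).comp (Primrec.beq.comp snd (snd.comp fst))
    apply list_map hfil
    apply Primrec₂.mk
    exact primrec_lit.comp
      ((list_getD false).comp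
        (snd.comp (snd.comp (snd.comp (fst.comp fst))))
        (nat_add.comp (nat_mul.comp (snd.comp fst) (fst.comp (fst.comp fst))) snd))
      (primrec_since.comp (primrec_atom.comp (snd.comp fst)) (primrec_atom.comp snd))
  exact primrec_bigConj.comp (list_append.comp (list_append.comp seg1 seg2) seg3)

/-! ### Primrec of eqCheck, satQ, Fmap -/

lemma primrec_eqCheck : Primrec fun q : ((List Formula × ℕ) × TT) × Formula =>
    eqCheck q.1.1.1 q.1.1.2 q.1.2 q.2 := by
  have hL : Primrec fun q : ((List Formula × ℕ) × TT) × Formula => q.1.1.1 :=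
    fst.comp (fst.comp fst)
  have hn : Primrec fun q : ((List Formula × ℕ) × TT) × Formula => q.1.1.2 :=
    snd.comp (fst.comp fst)
  have ht1 : Primrec fun q : ((List Formula × ℕ) × TT) × Formula => q.1.2.1 :=
    fst.comp (snd.comp fst)
  have ht2 : Primrec fun q : ((List Formula × ℕ) × TT) × Formula => q.1.2.2.1 :=
    fst.comp (snd.comp (snd.comp fst))
  have ht3 : Primrec fun q : ((List Formula × ℕ) × TT) × Formula => q.1.2.2.2 :=
    snd.comp (snd.comp (snd.comp fst))
  have hδ : Primrec fun q : ((List Formula × ℕ) × TT) × Formula => q.2 := snd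
  have hc1 : Primrec fun q : ((List Formula × ℕ) × TT) × Formula => child1 q.2 :=
    primrec_child1.comp hδ
  have hc2 : Primrec fun q : ((List Formula × ℕ) × TT) × Formula => child2 q.2 :=
    primrec_child2.comp hδ
  have hidxδ : Primrec fun q : ((List Formula × ℕ) × TT) × Formula =>
      q.1.1.1.idxOf q.2 := list_idxOf.comp hδ hL
  have hidxc1 : Primrec fun q : ((List Formula × ℕ) × TT) × Formula =>
      q.1.1.1.idxOf (child1 q.2) := list_idxOf.comp hc1 hL
  have hidxc2 : Primrec fun q : ((List Formula × ℕ) × TT) × Formula =>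
      q.1.1.1.idxOf (child2 q.2) := list_idxOf.comp hc2 hL
  have hbitδ : Primrec fun q : ((List Formula × ℕ) × TT) × Formula =>
      q.1.2.1.getD (q.1.1.1.idxOf q.2) false := (list_getD false).comp ht1 hidxδ
  have hbitc1 : Primrec fun q : ((List Formula × ℕ) × TT) × Formula =>
      q.1.2.1.getD (q.1.1.1.idxOf (child1 q.2)) false := (list_getD false).comp ht1 hidxc1
  have hbitc2 : Primrec fun q : ((List Formula × ℕ) × TT) × Formula =>
      q.1.2.1.getD (q.1.1.1.idxOf (child2 q.2)) false := (list_getD false).comp ht1 hidxc2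
  have hctor : ∀ r : ℕ, PrimrecPred fun q : ((List Formula × ℕ) × TT) × Formula =>
      ctor q.2 = r := fun r => PrimrecRel.comp Primrec.eq (primrec_ctor.comp hδ) (const r)
  have hbeq : Primrec₂ (fun a b : Bool => a == b) := Primrec.beq
  have hcc : PrimrecPred fun q : ((List Formula × ℕ) × TT) × Formula =>
      child1 q.2 = child2 q.2 := PrimrecRel.comp Primrec.eq hc1 hc2
  have b4 : Primrec fun q : ((List Formula × ℕ) × TT) × Formula =>
      q.1.2.1.getD (q.1.1.1.idxOf q.2) false ==
        (if child1 q.2 = child2 q.2 then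
          q.1.2.1.getD (q.1.1.1.idxOf (child1 q.2)) false
         else q.1.2.2.2.getD
          ((q.1.1.1.idxOf (child1 q.2)) * q.1.1.2 + q.1.1.1.idxOf (child2 q.2)) false) :=
    hbeq.comp hbitδ (Primrec.ite hcc hbitc1
      ((list_getD false).comp ht3 (nat_add.comp (nat_mul.comp hidxc1 hn) hidxc2)))
  have b3 : Primrec fun q : ((List Formula × ℕ) × TT) × Formula =>
      q.1.2.1.getD (q.1.1.1.idxOf q.2) false ==
        q.1.2.2.1.getD (q.1.1.1.idxOf (child1 q.2)) false :=
    hbeq.comp hbitδ ((list_getD false).comp ht2 hidxc1)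
  have b2 : Primrec fun q : ((List Formula × ℕ) × TT) × Formula =>
      q.1.2.1.getD (q.1.1.1.idxOf q.2) false ==
        (q.1.2.1.getD (q.1.1.1.idxOf (child1 q.2)) false &&
         q.1.2.1.getD (q.1.1.1.idxOf (child2 q.2)) false) :=
    hbeq.comp hbitδ ((Primrec.dom_bool₂ (· && ·)).comp hbitc1 hbitc2)
  have b1 : Primrec fun q : ((List Formula × ℕ) × TT) × Formula =>
      q.1.2.1.getD (q.1.1.1.idxOf q.2) false ==
        !(q.1.2.1.getD (q.1.1.1.idxOf (child1 q.2)) false) :=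
    hbeq.comp hbitδ ((Primrec.dom_bool Bool.not).comp hbitc1)
  have h := Primrec.ite (hctor 0) (const true) <|
    Primrec.ite (hctor 1) b1 <| Primrec.ite (hctor 2) b2 <| Primrec.ite (hctor 3) b3 b4
  exact h.of_eq fun q => by rw [eqCheck]

lemma primrec_satQ : Primrec fun q : ((List Formula × List Formula) × ℕ) × TT =>
    satQ q.1.1.1 q.1.1.2 q.1.2 q.2 := by
  have hL : Primrec fun q : ((List Formula × List Formula) × ℕ) × TT => q.1.1.1 :=
    fst.comp (fst.comp fst)
  have hΓ : Primrec fun q : ((List Formula × List Formula) × ℕ) × TT => q.1.1.2 :=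
    snd.comp (fst.comp fst)
  have hn : Primrec fun q : ((List Formula × List Formula) × ℕ) × TT => q.1.2 :=
    snd.comp fst
  have ht : Primrec fun q : ((List Formula × List Formula) × ℕ) × TT => q.2 := snd
  have ht1 : Primrec fun q : ((List Formula × List Formula) × ℕ) × TT => q.2.1 :=
    fst.comp snd
  have hall1 : Primrec fun q : ((List Formula × List Formula) × ℕ) × TT =>
      q.1.1.1.all (eqCheck q.1.1.1 q.1.2 q.2) := by
    apply primrec_list_all hL
    apply Primrec₂.mk
    exact primrec_eqCheck.comp
      ((((hL.comp fst).pair (hn.comp fst)).pair (ht.comp fst)).pair snd)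
  have hall2 : Primrec fun q : ((List Formula × List Formula) × ℕ) × TT =>
      q.1.1.2.all (fun γ => q.2.1.getD (q.1.1.1.idxOf γ) false) := by
    apply primrec_list_all hΓ
    apply Primrec₂.mk
    exact (list_getD false).comp (ht1.comp fst)
      (list_idxOf.comp snd (hL.comp fst))
  exact (Primrec.dom_bool₂ (· && ·)).comp hall1 hall2

lemma primrec_ruleList : Primrec ruleList := by
  unfold ruleList
  exact list_append.comp (primrec_subfs.comp primrec_conclusion)
    (list_flatMap primrec_premises (Primrec₂.mk (primrec_subfs.comp snd)))

lemma primrec_ds : Primrec fun r : Rule =>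
    (triples (ruleList r).length).filter
      (satQ (ruleList r) r.premises (ruleList r).length) := by
  apply primrec_list_filter
    (primrec_triples.comp (list_length.comp primrec_ruleList))
  apply Primrec₂.mk
  exact primrec_satQ.comp
    (((((primrec_ruleList.comp fst).pair (primrec_premises.comp fst)).pair
      (list_length.comp (primrec_ruleList.comp fst))).pair snd))

lemma primrec_premiseF : Primrec fun r : Rule => premiseF (ruleList r) r.premises := by
  have h : Primrec fun r : Rule =>
      bigDisj (((triples (ruleList r).length).filter
        (satQ (ruleList r) r.premises (ruleList r).length)).map
          (disjunct' (ruleList r).length)) := by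
    apply primrec_bigDisj.comp
    apply list_map primrec_ds
    apply Primrec₂.mk
    exact primrec_disjunct'.comp
      (list_length.comp (primrec_ruleList.comp fst)) snd
  exact h.of_eq fun r => rfl

lemma primrec_Fmap : Primrec Fmap := by
  have hcond : PrimrecPred fun r : Rule =>
      (triples (ruleList r).length).filter
        (satQ (ruleList r) r.premises (ruleList r).length) = [] :=
    PrimrecRel.comp Primrec.eq primrec_ds (const [])
  have h : Primrec fun r : Rule =>
      if (triples (ruleList r).length).filter
          (satQ (ruleList r) r.premises (ruleList r).length) = []
      then badRule
      else Rule.mk [premiseF (ruleList r) r.premises] (.atom 0) :=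
    Primrec.ite hcond (const badRule)
      (primrec_mkRule.comp (list_cons.comp primrec_premiseF (const [])) (const (Formula.atom 0)))
  apply h.of_eq
  intro r
  by_cases hc : (triples (ruleList r).length).filter
      (satQ (ruleList r) r.premises (ruleList r).length) = [] <;>
    simp [Fmap, hc]

end Disjunct

end RNFproof
namespace RNFproof

open Primrec

lemma primrec_g : Primrec fun c : ℕ =>
    encR (Fmap ((Encodable.decode c : Option Rule).getD default)) := by
  have h1 : Primrec fun c : ℕ => ((Encodable.decode c : Option Rule)).getD default :=
    option_getD.comp Primrec.decode (const default)
  have h2 : Primrec fun r : Rule => encR (Fmap r) :=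
    (Primrec.encode.comp primrec_Fmap).of_eq fun r => encode_rule _
  exact h2.comp h1

lemma g_spec (r : Rule) :
    encR (Fmap r) =
      encR (Fmap (((Encodable.decode (encR r) : Option Rule)).getD default)) := by
  rw [← encode_rule r, Encodable.encodek]
  rfl

end RNFproof

/-- there is a computable function producing, for every rule, a
rule in reduced normal form which is admissible in `LTL_{Past,m}` iff the
original rule is. -/
theorem reduced_normal_form_for_admissibility (m : ℕ) (hm : 1 ≤ m) :
    ∃ F : Rule → Rule,
      (∃ g : ℕ → ℕ, Computable g ∧ ∀ r : Rule, encR (F r) = g (encR r)) ∧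
      (∀ r : Rule, IsRNF (F r)) ∧
      (∀ r : Rule, Admissible m r ↔ Admissible m (F r)) :=
  ⟨RNFproof.Fmap,
    ⟨fun c => encR (RNFproof.Fmap (((Encodable.decode c : Option Rule)).getD default)),
      RNFproof.primrec_g.to_comp, fun r => RNFproof.g_spec r⟩,
    RNFproof.Fmap_isRNF,
    fun r => ⟨fun h => RNFproof.admissible_Fmap_of_admissible h,
      fun h => RNFproof.admissible_of_admissible_Fmap h⟩⟩
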